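/- If H is a normal subgroup of a group G such that every element of H has odd order, then the induced homomorphism λπ : λ(G) → λ(G/H) is injective on each minimal left ideal of λ(G), where G is finite (so λ(G) is a finite semigroup). -/

import Mathlib

def Linked {X : Type*} (L : Set (Set X)) : Prop :=
  ∀ A ∈ L, ∀ B ∈ L, (A ∩ B).Nonempty

def MaxLinked {X : Type*} (L : Set (Set X)) : Prop :=
  Linked L ∧ ∀ L' : Set (Set X), Linked L' → L ⊆ L' → L' = L

def perp {X : Type*} (L : Set (Set X)) : Set (Set X) :=
  {A | ∀ F ∈ L, (A ∩ F).Nonempty}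

def conv {G : Type*} [Group G] (A B : Set (Set G)) : Set (Set G) :=
  {S | {x : G | {z : G | x * z ∈ S} ∈ B} ∈ A}

def Invariant {G : Type*} [Group G] (L : Set (Set G)) : Prop :=
  ∀ x : G, (fun A => (fun a => x * a) '' A) '' L = L

def MaxInvLinked {G : Type*} [Group G] (L : Set (Set G)) : Prop :=
  Linked L ∧ Invariant L ∧
    ∀ L' : Set (Set G), Linked L' → Invariant L' → L ⊆ L' → L' = L

def IsLeftIdealLam {G : Type*} [Group G] (I : Set (Set (Set G))) : Prop :=
  I.Nonempty ∧ (∀ B ∈ I, MaxLinked B) ∧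
    ∀ A : Set (Set G), MaxLinked A → ∀ B ∈ I, conv A B ∈ I

def IsMinimalLeftIdealLam {G : Type*} [Group G] (I : Set (Set (Set G))) : Prop :=
  IsLeftIdealLam I ∧ ∀ J : Set (Set (Set G)), IsLeftIdealLam J → J ⊆ I → J = I

section Aux

open Set

lemma univ_mem_maxLinked {X : Type*} [Nonempty X] {L : Set (Set X)} (hL : MaxLinked L) :
    univ ∈ L := by
  have h : insert univ L = L := by
    refine hL.2 _ ?_ (subset_insert _ _)
    rintro A (rfl | hA) B (rfl | hB)
    · simp
    · have := hL.1 B hB B hB; simpa using this.mono (by intro x hx; exact hx.1)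
    · have := hL.1 A hA A hA; simpa using this.mono (by intro x hx; exact hx.1)
    · exact hL.1 A hA B hB
  rw [← h]; exact mem_insert _ _

lemma mem_of_meets {X : Type*} [Nonempty X] {L : Set (Set X)} (hL : MaxLinked L)
    {A : Set X} (h : ∀ F ∈ L, (A ∩ F).Nonempty) : A ∈ L := by
  have hAne : A.Nonempty := by simpa using h univ (univ_mem_maxLinked hL)
  have heq : insert A L = L := by
    refine hL.2 _ ?_ (subset_insert _ _)
    rintro B (rfl | hB) C (rfl | hC)
    · simpa using hAne
    · exact h C hC
    · rw [inter_comm]; exact h B hB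
    · exact hL.1 B hB C hC
  rw [← heq]; exact mem_insert _ _

lemma mem_of_superset' {X : Type*} [Nonempty X] {L : Set (Set X)} (hL : MaxLinked L)
    {A B : Set X} (hA : A ∈ L) (hAB : A ⊆ B) : B ∈ L :=
  mem_of_meets hL fun F hF => (hL.1 A hA F hF).mono (inter_subset_inter_left _ hAB)

lemma compl_mem_of_not_mem {X : Type*} [Nonempty X] {L : Set (Set X)} (hL : MaxLinked L)
    {A : Set X} (hA : A ∉ L) : Aᶜ ∈ L := by
  by_contra h
  have : ∃ F ∈ L, ¬(A ∩ F).Nonempty := by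
    by_contra hc
    push_neg at hc
    exact hA (mem_of_meets hL hc)
  obtain ⟨F, hF, hAF⟩ := this
  exact h (mem_of_superset' hL hF (by
    intro x hx hxA
    exact hAF ⟨x, hxA, hx⟩))

lemma conv_assoc {G : Type*} [Group G] (A B C : Set (Set G)) :
    conv (conv A B) C = conv A (conv B C) := by
  ext S
  simp only [conv, Set.mem_setOf_eq, mul_assoc]

lemma maxLinked_conv {G : Type*} [Group G] {A B : Set (Set G)}
    (hA : MaxLinked A) (hB : MaxLinked B) : MaxLinked (conv A B) := by
  constructor
  · intro S hS S' hS'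
    obtain ⟨x, hx1, hx2⟩ := hA.1 _ hS _ hS'
    obtain ⟨z, hz1, hz2⟩ := hB.1 _ hx1 _ hx2
    exact ⟨x * z, hz1, hz2⟩
  · intro L' hL' hsub
    refine Set.Subset.antisymm ?_ hsub
    intro S hS
    by_contra hSc
    have hU : {x : G | {z : G | x * z ∈ S} ∈ B}ᶜ ∈ A := compl_mem_of_not_mem hA hSc
    have hSc' : Sᶜ ∈ conv A B := by
      refine mem_of_superset' hA hU ?_
      intro x hx
      have : {z : G | x * z ∈ S}ᶜ ∈ B := compl_mem_of_not_mem hB hx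
      show {z : G | x * z ∈ Sᶜ} ∈ B
      exact this
    obtain ⟨y, hy1, hy2⟩ := hL' S hS _ (hsub hSc')
    exact hy2 hy1

def maj {G : Type*} [Group G] (H : Subgroup G) : Set (Set G) :=
  {S | (H : Set G).ncard < 2 * (S ∩ (H : Set G)).ncard}

variable {G : Type*} [Group G] [Fintype G] (H : Subgroup G)

lemma odd_ncard_of_odd_orders (hodd : ∀ h ∈ H, Odd (orderOf h)) :
    Odd ((H : Set G).ncard) := by
  classical
  haveI : Fintype H := Fintype.ofFinite _
  have hc : (H : Set G).ncard = Fintype.card H := by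
    rw [← Nat.card_coe_set_eq, ← Nat.card_eq_fintype_card]
    exact Nat.card_congr (Equiv.refl _)
  rw [hc, ← Nat.not_even_iff_odd]
  intro h2
  haveI : Fact (Nat.Prime 2) := ⟨Nat.prime_two⟩
  obtain ⟨g, hg⟩ := exists_prime_orderOf_dvd_card (G := H) 2 h2.two_dvd
  have h1 : orderOf (g : G) = orderOf g := orderOf_injective H.subtype H.subtype_injective g
  have h3 := hodd (g : G) g.2
  rw [h1, hg] at h3
  simp [Nat.odd_iff] at h3

lemma maj_maxLinked (hodd : Odd ((H : Set G).ncard)) : MaxLinked (maj H) := by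
  have hpos : 0 < (H : Set G).ncard := by
    rcases hodd with ⟨k, hk⟩; omega
  constructor
  · intro S hS S' hS'
    have h1 := Set.ncard_inter_add_ncard_union (S ∩ (H : Set G)) (S' ∩ (H : Set G))
      (Set.toFinite _) (Set.toFinite _)
    have h2 : ((S ∩ (H : Set G)) ∪ (S' ∩ (H : Set G))).ncard ≤ (H : Set G).ncard :=
      Set.ncard_le_ncard (Set.union_subset inter_subset_right inter_subset_right)
        (Set.toFinite _)
    have hS1 : (H : Set G).ncard < 2 * (S ∩ (H : Set G)).ncard := hS
    have hS2 : (H : Set G).ncard < 2 * (S' ∩ (H : Set G)).ncard := hS'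
    have hkey : 0 < ((S ∩ (H : Set G)) ∩ (S' ∩ (H : Set G))).ncard := by omega
    obtain ⟨x, hx⟩ := Set.nonempty_of_ncard_ne_zero hkey.ne'
    exact ⟨x, hx.1.1, hx.2.1⟩
  · intro L' hL' hsub
    refine Set.Subset.antisymm ?_ hsub
    intro S hS
    by_contra hSc
    have ha : 2 * (S ∩ (H : Set G)).ncard < (H : Set G).ncard := by
      have h1 : ¬ ((H : Set G).ncard < 2 * (S ∩ (H : Set G)).ncard) := hSc
      have h2 : 2 * (S ∩ (H : Set G)).ncard ≠ (H : Set G).ncard := by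
        intro h
        rw [Nat.odd_iff, ← h] at hodd
        omega
      omega
    have hdiff : ((H : Set G) \ S) ∈ maj H := by
      have he : ((H : Set G) \ S) ∩ (H : Set G) = (H : Set G) \ S := by
        rw [Set.inter_eq_left]; exact diff_subset
      have he2 : (H : Set G) \ S = (H : Set G) \ (S ∩ (H : Set G)) := by
        ext x; simp only [mem_diff, mem_inter_iff]; tauto
      have hcard : ((H : Set G) \ S).ncard
          = (H : Set G).ncard - (S ∩ (H : Set G)).ncard := by
        rw [he2, Set.ncard_diff inter_subset_right (Set.toFinite _)]
      have hle : (S ∩ (H : Set G)).ncard ≤ (H : Set G).ncard :=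
        Set.ncard_le_ncard inter_subset_right (Set.toFinite _)
      show (H : Set G).ncard < 2 * (((H : Set G) \ S) ∩ (H : Set G)).ncard
      rw [he, hcard]
      omega
    obtain ⟨y, hy1, hy2⟩ := hL' S hS _ (hsub hdiff)
    exact hy2.2 hy1

variable [H.Normal]

def cosetMaj (S : Set G) : Set (G ⧸ H) :=
  {c | (H : Set G).ncard < 2 * (S ∩ QuotientGroup.mk ⁻¹' {c}).ncard}

omit [Fintype G] [H.Normal] in
lemma ncard_inter_coset (S : Set G) (x : G) :
    ({z : G | x * z ∈ S} ∩ (H : Set G)).ncard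
      = (S ∩ QuotientGroup.mk ⁻¹' {(QuotientGroup.mk x : G ⧸ H)}).ncard := by
  have himg : (fun z => x * z) '' ({z : G | x * z ∈ S} ∩ (H : Set G))
      = S ∩ QuotientGroup.mk ⁻¹' {(QuotientGroup.mk x : G ⧸ H)} := by
    ext y
    simp only [mem_image, mem_inter_iff, mem_setOf_eq, mem_preimage, mem_singleton_iff]
    constructor
    · rintro ⟨z, ⟨hz1, hz2⟩, rfl⟩
      refine ⟨hz1, ?_⟩
      exact (QuotientGroup.eq.mpr (by simpa using H.inv_mem hz2)).symm
    · rintro ⟨hy, hq⟩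
      refine ⟨x⁻¹ * y, ⟨?_, ?_⟩, by group⟩
      · simpa [mul_assoc] using hy
      · exact QuotientGroup.eq.mp hq.symm
  rw [← himg, Set.ncard_image_of_injective _ (mul_right_injective x)]

omit [Fintype G] in
lemma conv_maj_eq (L : Set (Set G)) :
    conv L (maj H) = {S : Set G | QuotientGroup.mk ⁻¹' (cosetMaj H S) ∈ L} := by
  ext S
  show ({x : G | {z : G | x * z ∈ S} ∈ maj H} ∈ L) ↔ _
  have : {x : G | {z : G | x * z ∈ S} ∈ maj H}
      = QuotientGroup.mk ⁻¹' (cosetMaj H S) := by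
    ext x
    show ((H : Set G).ncard < 2 * ({z : G | x * z ∈ S} ∩ (H : Set G)).ncard) ↔ _
    rw [ncard_inter_coset H S x]
    rfl
  rw [this]
  rfl

omit [Fintype G] in
lemma ncard_coset (c : G ⧸ H) :
    (QuotientGroup.mk ⁻¹' {c} : Set G).ncard = (H : Set G).ncard := by
  obtain ⟨x, rfl⟩ := QuotientGroup.mk_surjective c
  have := ncard_inter_coset H univ x
  simpa using this.symm

omit [Fintype G] in
lemma cosetMaj_preimage (hpos : 0 < (H : Set G).ncard) (C : Set (G ⧸ H)) :
    cosetMaj H (QuotientGroup.mk ⁻¹' C) = C := by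
  ext c
  show ((H : Set G).ncard
      < 2 * ((QuotientGroup.mk ⁻¹' C) ∩ QuotientGroup.mk ⁻¹' {c}).ncard) ↔ c ∈ C
  by_cases hc : c ∈ C
  · have he : (QuotientGroup.mk ⁻¹' C) ∩ QuotientGroup.mk ⁻¹' {c}
        = (QuotientGroup.mk ⁻¹' {c} : Set G) := by
      apply Set.Subset.antisymm inter_subset_right
      intro y hy
      exact ⟨by simpa [show (QuotientGroup.mk y : G ⧸ H) = c from hy] using hc, hy⟩
    rw [he, ncard_coset H c]
    simp [hc]
    omega
  · have he : (QuotientGroup.mk ⁻¹' C) ∩ QuotientGroup.mk ⁻¹' {c} = (∅ : Set G) := by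
      ext y
      simp only [mem_inter_iff, mem_preimage, mem_singleton_iff, mem_empty_iff_false, iff_false]
      rintro ⟨h1, h2⟩
      exact hc (h2 ▸ h1)
    rw [he]
    simp [hc]

omit [Fintype G] in
lemma lamPi_conv (A B : Set (Set G)) :
    {C : Set (G ⧸ H) | QuotientGroup.mk ⁻¹' C ∈ conv A B}
      = conv {C : Set (G ⧸ H) | QuotientGroup.mk ⁻¹' C ∈ A}
          {C : Set (G ⧸ H) | QuotientGroup.mk ⁻¹' C ∈ B} := by
  ext C
  show ({x : G | {z : G | x * z ∈ QuotientGroup.mk ⁻¹' C} ∈ B} ∈ A) ↔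
    ({y : G ⧸ H | QuotientGroup.mk ⁻¹' {w : G ⧸ H | y * w ∈ C} ∈ B}
      ∈ {C : Set (G ⧸ H) | QuotientGroup.mk ⁻¹' C ∈ A})
  have key : {x : G | {z : G | x * z ∈ QuotientGroup.mk ⁻¹' C} ∈ B}
      = QuotientGroup.mk ⁻¹' {y : G ⧸ H | QuotientGroup.mk ⁻¹' {w : G ⧸ H | y * w ∈ C} ∈ B} := by
    ext x
    have : {z : G | x * z ∈ QuotientGroup.mk ⁻¹' C}
        = QuotientGroup.mk ⁻¹' {w : G ⧸ H | (QuotientGroup.mk x : G ⧸ H) * w ∈ C} := by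
      ext z
      simp [QuotientGroup.mk_mul]
    show ({z : G | x * z ∈ QuotientGroup.mk ⁻¹' C} ∈ B) ↔ _
    rw [this]
    rfl
  rw [key]
  rfl

omit [Fintype G] in
lemma lamPi_conv_maj (L : Set (Set G)) (hpos : 0 < (H : Set G).ncard) :
    {C : Set (G ⧸ H) | QuotientGroup.mk ⁻¹' C ∈ conv L (maj H)}
      = {C : Set (G ⧸ H) | QuotientGroup.mk ⁻¹' C ∈ L} := by
  ext C
  rw [mem_setOf_eq, conv_maj_eq H L, mem_setOf_eq, cosetMaj_preimage H hpos C, mem_setOf_eq]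

omit [Fintype G] in
lemma inj_on_image_maj {L M : Set (Set G)} (hpos : 0 < (H : Set G).ncard)
    (h : {C : Set (G ⧸ H) | QuotientGroup.mk ⁻¹' C ∈ conv L (maj H)}
      = {C : Set (G ⧸ H) | QuotientGroup.mk ⁻¹' C ∈ conv M (maj H)}) :
    conv L (maj H) = conv M (maj H) := by
  have hLM : {C : Set (G ⧸ H) | QuotientGroup.mk ⁻¹' C ∈ L}
      = {C : Set (G ⧸ H) | QuotientGroup.mk ⁻¹' C ∈ M} := by
    rw [← lamPi_conv_maj H L hpos, ← lamPi_conv_maj H M hpos, h]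
  rw [conv_maj_eq H L, conv_maj_eq H M]
  ext S
  constructor
  · intro hS
    have h1 : cosetMaj H S ∈ {C : Set (G ⧸ H) | QuotientGroup.mk ⁻¹' C ∈ L} := hS
    rw [hLM] at h1
    exact h1
  · intro hS
    have h1 : cosetMaj H S ∈ {C : Set (G ⧸ H) | QuotientGroup.mk ⁻¹' C ∈ M} := hS
    rw [← hLM] at h1
    exact h1

lemma exists_idem_conv (x : Set (Set G)) (C : Set (Set (Set G))) (hx : x ∈ C)
    (hmul : ∀ y ∈ C, conv y x ∈ C) : ∃ p ∈ C, conv p p = p := by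
  classical
  set pow : ℕ → Set (Set G) := fun n => (fun y => conv y x)^[n] x with hpow
  have hpow_succ : ∀ n, pow (n + 1) = conv (pow n) x := by
    intro n
    simp only [hpow, Function.iterate_succ_apply']
  have hmem : ∀ n, pow n ∈ C := by
    intro n
    induction n with
    | zero => exact hx
    | succ n ih => rw [hpow_succ]; exact hmul _ ih
  have hadd : ∀ a b, conv (pow a) (pow b) = pow (a + b + 1) := by
    intro a b
    induction b with
    | zero => exact (hpow_succ a).symm
    | succ b ih =>
      rw [hpow_succ, ← conv_assoc, ih, ← hpow_succ]
      ring_nf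
  obtain ⟨m, n, hmn, heq⟩ := Finite.exists_ne_map_eq_of_infinite pow
  wlog hlt : m < n generalizing m n
  · exact this n m hmn.symm heq.symm (by omega)
  have hshift : ∀ t, pow (n + t) = pow (m + t) := by
    intro t
    induction t with
    | zero => simpa using heq.symm
    | succ t ih =>
      have e1 : n + (t + 1) = (n + t) + 1 := by omega
      have e2 : m + (t + 1) = (m + t) + 1 := by omega
      rw [e1, e2, hpow_succ, hpow_succ, ih]
  set d := n - m with hd
  have hd1 : 1 ≤ d := by omega
  have hper1 : ∀ a, m ≤ a → pow (a + d) = pow a := by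
    intro a ha
    have h1 : a + d = n + (a - m) := by omega
    rw [h1, hshift, show m + (a - m) = a by omega]
  have hper : ∀ k a, m ≤ a → pow (a + k * d) = pow a := by
    intro k
    induction k with
    | zero => simp
    | succ k ih =>
      intro a ha
      have h1 : a + (k + 1) * d = (a + k * d) + d := by ring
      rw [h1, hper1 _ (by omega), ih a ha]
  set e := (m + 1) * d - 1 with he
  have hem : m ≤ e := by
    have : m + 1 ≤ (m + 1) * d := Nat.le_mul_of_pos_right _ (by omega)
    omega
  refine ⟨pow e, hmem e, ?_⟩
  rw [hadd e e]
  have h2 : e + e + 1 = e + (m + 1) * d := by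
    have h3 : 1 ≤ (m + 1) * d := Nat.mul_pos (by omega) (by omega)
    omega
  rw [h2, hper (m + 1) e hem]

end Aux

theorem lam_pi_injOn_minimal_left_ideals {G : Type*} [Group G] [Fintype G]
    (H : Subgroup G) [H.Normal] (hodd : ∀ h ∈ H, Odd (orderOf h)) :
    ∀ I : Set (Set (Set G)), IsMinimalLeftIdealLam I →
      Set.InjOn (fun L : Set (Set G) => {B : Set (G ⧸ H) | QuotientGroup.mk ⁻¹' B ∈ L}) I := by
  classical
  intro I hI q1 hq1 q2 hq2 hpi
  have hpi' : {B : Set (G ⧸ H) | QuotientGroup.mk ⁻¹' B ∈ q1}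
      = {B : Set (G ⧸ H) | QuotientGroup.mk ⁻¹' B ∈ q2} := hpi
  have hoddc : Odd ((H : Set G).ncard) := odd_ncard_of_odd_orders H hodd
  have hpos : 0 < (H : Set G).ncard := by rcases hoddc with ⟨k, hk⟩; omega
  have hmaj : MaxLinked (maj H) := maj_maxLinked H hoddc
  obtain ⟨⟨hIne, hIml, hIdeal⟩, hImin⟩ := hI
  -- the left ideal J = λ(G) * maj H
  have hJml : ∀ M ∈ {M | ∃ L, MaxLinked L ∧ M = conv L (maj H)}, MaxLinked M := by
    rintro M ⟨L, hL, rfl⟩; exact maxLinked_conv hL hmaj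
  have hJclosed : ∀ A : Set (Set G), MaxLinked A →
      ∀ M ∈ {M | ∃ L, MaxLinked L ∧ M = conv L (maj H)},
        conv A M ∈ {M | ∃ L, MaxLinked L ∧ M = conv L (maj H)} := by
    rintro A hA M ⟨L, hL, rfl⟩
    exact ⟨conv A L, maxLinked_conv hA hL, (conv_assoc A L (maj H)).symm⟩
  have hJinj : ∀ r ∈ {M | ∃ L, MaxLinked L ∧ M = conv L (maj H)},
      ∀ r' ∈ {M | ∃ L, MaxLinked L ∧ M = conv L (maj H)},
      {B : Set (G ⧸ H) | QuotientGroup.mk ⁻¹' B ∈ r}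
        = {B : Set (G ⧸ H) | QuotientGroup.mk ⁻¹' B ∈ r'} → r = r' := by
    rintro r ⟨L, hL, rfl⟩ r' ⟨L', hL', rfl⟩ h
    exact inj_on_image_maj H hpos h
  -- an idempotent e in I
  obtain ⟨q0, hq0⟩ := hIne
  obtain ⟨e, heI, hee⟩ :=
    exists_idem_conv q0 I hq0 (fun y hy => hIdeal y (hIml y hy) q0 hq0)
  -- an idempotent u ∈ J with conv e u = u
  have hpJ : conv (maj H) (maj H) ∈ {M | ∃ L, MaxLinked L ∧ M = conv L (maj H)} :=
    ⟨maj H, hmaj, rfl⟩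
  have hwJ : conv e (conv (maj H) (maj H)) ∈ {M | ∃ L, MaxLinked L ∧ M = conv L (maj H)} :=
    hJclosed e (hIml e heI) _ hpJ
  have hew : conv e (conv e (conv (maj H) (maj H))) = conv e (conv (maj H) (maj H)) := by
    rw [← conv_assoc, hee]
  obtain ⟨u, ⟨huJ, heu⟩, huu⟩ :=
    exists_idem_conv (conv e (conv (maj H) (maj H)))
      {y | y ∈ {M | ∃ L, MaxLinked L ∧ M = conv L (maj H)} ∧ conv e y = y}
      ⟨hwJ, hew⟩
      (by
        rintro y ⟨hyJ, hye⟩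
        refine ⟨hJclosed y (hJml y hyJ) _ hwJ, ?_⟩
        rw [← conv_assoc, hye])
  -- v = conv u e is an idempotent in I, hence a right identity on I
  have hvI : conv u e ∈ I := hIdeal u (hJml u huJ) e heI
  have hvv : conv (conv u e) (conv u e) = conv u e := by
    rw [conv_assoc, ← conv_assoc e u e, heu, ← conv_assoc, huu]
  have hrightid : ∀ q ∈ I, conv q (conv u e) = q := by
    have hSv : IsLeftIdealLam {M | ∃ N, MaxLinked N ∧ M = conv N (conv u e)} := by
      refine ⟨⟨conv (conv u e) (conv u e), conv u e, hIml _ hvI, rfl⟩, ?_, ?_⟩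
      · rintro M ⟨N, hN, rfl⟩; exact maxLinked_conv hN (hIml _ hvI)
      · rintro A hA M ⟨N, hN, rfl⟩
        exact ⟨conv A N, maxLinked_conv hA hN, (conv_assoc A N (conv u e)).symm⟩
    have hsub : {M | ∃ N, MaxLinked N ∧ M = conv N (conv u e)} ⊆ I := by
      rintro M ⟨N, hN, rfl⟩; exact hIdeal N hN _ hvI
    have hEq := hImin _ hSv hsub
    intro q hq
    rw [← hEq] at hq
    obtain ⟨N, hN, rfl⟩ := hq
    rw [conv_assoc, hvv]
  -- conclude
  have hr1J : conv q1 u ∈ {M | ∃ L, MaxLinked L ∧ M = conv L (maj H)} :=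
    hJclosed q1 (hIml q1 hq1) u huJ
  have hr2J : conv q2 u ∈ {M | ∃ L, MaxLinked L ∧ M = conv L (maj H)} :=
    hJclosed q2 (hIml q2 hq2) u huJ
  have himg : {B : Set (G ⧸ H) | QuotientGroup.mk ⁻¹' B ∈ conv q1 u}
      = {B : Set (G ⧸ H) | QuotientGroup.mk ⁻¹' B ∈ conv q2 u} := by
    rw [lamPi_conv H q1 u, lamPi_conv H q2 u, hpi']
  have hr : conv q1 u = conv q2 u := hJinj _ hr1J _ hr2J himg
  calc q1 = conv q1 (conv u e) := (hrightid q1 hq1).symm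
    _ = conv (conv q1 u) e := by rw [← conv_assoc]
    _ = conv (conv q2 u) e := by rw [hr]
    _ = conv q2 (conv u e) := by rw [← conv_assoc]
    _ = q2 := hrightid q2 hq2
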